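/- Let X be a nonempty finite set, let d ≥ 1, and for each x ∈ X let S_x be a d×d complex density matrix. For ρ > 0 let E_0(ρ) = max over probability distributions P on X of −log Tr[(∑_{x∈X} P(x) · S_x^{1/(1+ρ)})^{1+ρ}]. Then the limit lim_{ρ→∞} E_0(ρ)/ρ exists, is finite, and equals the minimum over all d×d density matrices F of max_{x∈X} (−log Tr(Π_x · F)), where Π_x denotes the orthogonal projection onto the range (support) of S_x, the minimum being attained and finite. -/

import Mathlib

open scoped ENNReal ComplexOrder

/-- Matrix power of a Hermitian matrix via the spectral functional calculus,
applying `t ↦ t ^ β` (`Real.rpow`, so `0 ^ β = 0` for `β ≠ 0`) to the eigenvalues.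
Junk value `0` for non-Hermitian matrices. -/
noncomputable def matRpow {d : ℕ} (A : Matrix (Fin d) (Fin d) ℂ) (β : ℝ) :
    Matrix (Fin d) (Fin d) ℂ :=
  if hA : A.IsHermitian then
    (hA.eigenvectorUnitary : Matrix (Fin d) (Fin d) ℂ) *
      (Matrix.diagonal fun i => ((hA.eigenvalues i ^ β : ℝ) : ℂ)) *
      star (hA.eigenvectorUnitary : Matrix (Fin d) (Fin d) ℂ)
  else 0

/-- Orthogonal projection onto the range (support) of a Hermitian matrix,
via the spectral decomposition. Junk value `0` for non-Hermitian matrices. -/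
noncomputable def suppProj {d : ℕ} (A : Matrix (Fin d) (Fin d) ℂ) :
    Matrix (Fin d) (Fin d) ℂ :=
  if hA : A.IsHermitian then
    (hA.eigenvectorUnitary : Matrix (Fin d) (Fin d) ℂ) *
      (Matrix.diagonal fun i => if hA.eigenvalues i = 0 then (0 : ℂ) else 1) *
      star (hA.eigenvectorUnitary : Matrix (Fin d) (Fin d) ℂ)
  else 0

/-- A density matrix: positive semidefinite with unit trace. -/
def IsDensityMatrix {d : ℕ} (A : Matrix (Fin d) (Fin d) ℂ) : Prop :=
  A.PosSemidef ∧ A.trace = 1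

/-- `-log r` as an extended nonnegative real, `+∞` when `r ≤ 0`. -/
noncomputable def negLog (r : ℝ) : ℝ≥0∞ :=
  if r ≤ 0 then ⊤ else ENNReal.ofReal (-Real.log r)

/-- Gallager's function `E₀(ρ) = max_P -log Tr[(∑_x P(x) Sₓ^{1/(1+ρ)})^{1+ρ}]`
of a classical-quantum channel. -/
noncomputable def E0 {X : Type*} [Fintype X] {d : ℕ}
    (S : X → Matrix (Fin d) (Fin d) ℂ) (ρ : ℝ) : ℝ :=
  sSup {r : ℝ | ∃ P : X → ℝ, (∀ x, 0 ≤ P x) ∧ (∑ x, P x = 1) ∧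
    r = -Real.log
      ((matRpow (∑ x, (P x : ℂ) • matRpow (S x) (1 / (1 + ρ))) (1 + ρ)).trace.re)}

namespace CQaux

open Matrix

variable {d : ℕ}

/-- spectral function of a Hermitian matrix -/
noncomputable def sf {A : Matrix (Fin d) (Fin d) ℂ} (hA : A.IsHermitian) (f : ℝ → ℝ) :
    Matrix (Fin d) (Fin d) ℂ :=
  (hA.eigenvectorUnitary : Matrix (Fin d) (Fin d) ℂ) *
    (Matrix.diagonal fun i => ((f (hA.eigenvalues i) : ℝ) : ℂ)) *
    star (hA.eigenvectorUnitary : Matrix (Fin d) (Fin d) ℂ)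

variable {A : Matrix (Fin d) (Fin d) ℂ} (hA : A.IsHermitian)

lemma star_mul_self_eigenvectorUnitary :
    star (hA.eigenvectorUnitary : Matrix (Fin d) (Fin d) ℂ) *
      (hA.eigenvectorUnitary : Matrix (Fin d) (Fin d) ℂ) = 1 :=
  Unitary.coe_star_mul_self _

lemma mul_star_self_eigenvectorUnitary :
    (hA.eigenvectorUnitary : Matrix (Fin d) (Fin d) ℂ) *
      star (hA.eigenvectorUnitary : Matrix (Fin d) (Fin d) ℂ) = 1 := by
  have := Unitary.coe_mul_star_self hA.eigenvectorUnitary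
  rwa [Unitary.coe_star] at this

lemma matRpow_eq_sf (β : ℝ) : matRpow A β = sf hA (fun t => t ^ β) := by
  rw [matRpow, dif_pos hA]; rfl

lemma suppProj_eq_sf : suppProj A = sf hA (fun t => if t = 0 then 0 else 1) := by
  have hfun : (fun i => if hA.eigenvalues i = 0 then (0 : ℂ) else 1)
      = fun i => (((if hA.eigenvalues i = 0 then (0 : ℝ) else 1) : ℝ) : ℂ) := by
    funext i
    split <;> simp
  rw [suppProj, dif_pos hA, sf, hfun]

lemma sf_congr {f g : ℝ → ℝ} (h : ∀ i, f (hA.eigenvalues i) = g (hA.eigenvalues i)) :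
    sf hA f = sf hA g := by
  have hfun : (fun i => ((f (hA.eigenvalues i) : ℝ) : ℂ))
      = fun i => ((g (hA.eigenvalues i) : ℝ) : ℂ) := by
    funext i
    rw [h i]
  rw [sf, sf, hfun]

lemma sf_id : sf hA id = A := by
  conv_rhs => rw [hA.spectral_theorem]
  rfl

lemma sf_one : sf hA (fun _ => 1) = 1 := by
  rw [sf]
  have : (Matrix.diagonal fun _ : Fin d => ((1 : ℝ) : ℂ)) = 1 := by
    simp [Matrix.diagonal_one]
  rw [this, mul_one, mul_star_self_eigenvectorUnitary]

lemma sf_sub (f g : ℝ → ℝ) : sf hA f - sf hA g = sf hA (fun t => f t - g t) := by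
  have hfun : (fun i => ((f (hA.eigenvalues i) : ℝ) : ℂ) - ((g (hA.eigenvalues i) : ℝ) : ℂ))
      = fun i => ((f (hA.eigenvalues i) - g (hA.eigenvalues i) : ℝ) : ℂ) := by
    funext i
    push_cast
    ring
  rw [sf, sf, sf, ← sub_mul, ← mul_sub, Matrix.diagonal_sub, hfun]

lemma sf_mul_sf (f g : ℝ → ℝ) : sf hA f * sf hA g = sf hA (fun t => f t * g t) := by
  set U : Matrix (Fin d) (Fin d) ℂ := (hA.eigenvectorUnitary : Matrix (Fin d) (Fin d) ℂ)
  have key : ∀ X : Matrix (Fin d) (Fin d) ℂ, star U * (U * X) = X := fun X => by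
    rw [← Matrix.mul_assoc, star_mul_self_eigenvectorUnitary, Matrix.one_mul]
  have hfun : (fun i => ((f (hA.eigenvalues i) : ℝ) : ℂ) * ((g (hA.eigenvalues i) : ℝ) : ℂ))
      = fun i => ((f (hA.eigenvalues i) * g (hA.eigenvalues i) : ℝ) : ℂ) := by
    funext i
    push_cast
    ring
  calc sf hA f * sf hA g
      = U * (((Matrix.diagonal fun i => ((f (hA.eigenvalues i) : ℝ) : ℂ)) *
          (Matrix.diagonal fun i => ((g (hA.eigenvalues i) : ℝ) : ℂ))) * star U) := by
        rw [sf, sf]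
        simp only [Matrix.mul_assoc]
        rw [key]
    _ = sf hA (fun t => f t * g t) := by
        rw [Matrix.diagonal_mul_diagonal, hfun, sf]
        simp only [Matrix.mul_assoc]
        rfl

lemma trace_sf (f : ℝ → ℝ) : (sf hA f).trace = ((∑ i, f (hA.eigenvalues i) : ℝ) : ℂ) := by
  rw [sf, Matrix.trace_mul_cycle]
  rw [star_mul_self_eigenvectorUnitary, Matrix.one_mul, Matrix.trace_diagonal]
  push_cast
  rfl

lemma trace_sf_re (f : ℝ → ℝ) : (sf hA f).trace.re = ∑ i, f (hA.eigenvalues i) := by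
  rw [trace_sf hA f, Complex.ofReal_re]

lemma sf_posSemidef {f : ℝ → ℝ} (hf : ∀ i, 0 ≤ f (hA.eigenvalues i)) :
    (sf hA f).PosSemidef := by
  have hdiag : (Matrix.diagonal fun i => ((f (hA.eigenvalues i) : ℝ) : ℂ)).PosSemidef :=
    Matrix.PosSemidef.diagonal fun i => Complex.zero_le_real.mpr (hf i)
  have := hdiag.mul_mul_conjTranspose_same
    (hA.eigenvectorUnitary : Matrix (Fin d) (Fin d) ℂ)
  rwa [← Matrix.star_eq_conjTranspose] at this

/-- scalar multiple of a PSD matrix by a nonnegative real -/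
lemma smul_posSemidef {B : Matrix (Fin d) (Fin d) ℂ} (hB : B.PosSemidef) {c : ℝ}
    (hc : 0 ≤ c) : ((c : ℂ) • B).PosSemidef := by
  refine Matrix.PosSemidef.of_dotProduct_mulVec_nonneg ?_ ?_
  · rw [Matrix.IsHermitian, Matrix.conjTranspose_smul, hB.1.eq]
    congr 1
    simp [Complex.conj_ofReal]
  · intro x
    rw [Matrix.smul_mulVec, dotProduct_smul]
    exact smul_nonneg (Complex.zero_le_real.mpr hc) (hB.dotProduct_mulVec_nonneg x)


variable {B F M : Matrix (Fin d) (Fin d) ℂ}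

lemma psd_diag_re_nonneg (hB : B.PosSemidef) (i : Fin d) : 0 ≤ (B i i).re := by
  have h := hB.re_dotProduct_nonneg (Pi.single i 1)
  simpa [Matrix.mulVec_single, dotProduct, Pi.single_apply, Finset.sum_ite_eq,
    apply_ite] using h

lemma psd_trace_re_nonneg (hB : B.PosSemidef) : 0 ≤ B.trace.re := by
  rw [Matrix.trace]
  simp only [Complex.re_sum]
  exact Finset.sum_nonneg fun i _ => psd_diag_re_nonneg hB i

noncomputable def _root_.Matrix.PosSemidef.sqrt (hB : B.PosSemidef) :
    Matrix (Fin d) (Fin d) ℂ :=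
  sf hB.1 Real.sqrt

lemma _root_.Matrix.PosSemidef.posSemidef_sqrt (hB : B.PosSemidef) : hB.sqrt.PosSemidef :=
  sf_posSemidef hB.1 fun _ => Real.sqrt_nonneg _

lemma _root_.Matrix.PosSemidef.sqrt_mul_self (hB : B.PosSemidef) : hB.sqrt * hB.sqrt = B := by
  rw [Matrix.PosSemidef.sqrt, sf_mul_sf]
  conv_rhs => rw [← sf_id hB.1]
  exact sf_congr hB.1 fun i => Real.mul_self_sqrt (hB.eigenvalues_nonneg i)

lemma psd_mul_psd_trace_re_nonneg (hB : B.PosSemidef) (hF : F.PosSemidef) :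
    0 ≤ (B * F).trace.re := by
  have hs := hB.posSemidef_sqrt
  have h1 : B * F = hB.sqrt * (hB.sqrt * F) := by
    rw [← Matrix.mul_assoc, hB.sqrt_mul_self]
  have h2 : (B * F).trace = (hB.sqrt * F * hB.sqrt).trace := by
    rw [h1, Matrix.trace_mul_comm, Matrix.mul_assoc]
  have h3 : (hB.sqrt * F * hB.sqrt).PosSemidef := by
    have := hF.mul_mul_conjTranspose_same hB.sqrt
    rwa [hs.1.eq] at this
  rw [h2]
  exact psd_trace_re_nonneg h3

section lmax

variable [Nonempty (Fin d)]

/-- largest eigenvalue -/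
noncomputable def lmax (hM : M.IsHermitian) : ℝ :=
  Finset.univ.sup' Finset.univ_nonempty hM.eigenvalues

lemma eigenvalues_le_lmax (hM : M.IsHermitian) (i : Fin d) : hM.eigenvalues i ≤ lmax hM :=
  Finset.le_sup' _ (Finset.mem_univ i)

lemma exists_eigenvalues_eq_lmax (hM : M.IsHermitian) : ∃ i, hM.eigenvalues i = lmax hM := by
  obtain ⟨i, _, hi⟩ := Finset.exists_mem_eq_sup' (Finset.univ_nonempty (α := Fin d))
    hM.eigenvalues
  exact ⟨i, hi.symm⟩

/-- B1: `Tr(MF) ≤ λ_max(M)` for a density matrix `F`. -/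
lemma trace_mul_density_re_le_lmax (hM : M.IsHermitian) (hF : IsDensityMatrix F) :
    ((M * F).trace).re ≤ lmax hM := by
  set U : Matrix (Fin d) (Fin d) ℂ := (hM.eigenvectorUnitary : Matrix (Fin d) (Fin d) ℂ) with hU
  set D : Matrix (Fin d) (Fin d) ℂ :=
    Matrix.diagonal (RCLike.ofReal ∘ hM.eigenvalues) with hD
  set G : Matrix (Fin d) (Fin d) ℂ := star U * F * U with hG
  have hGpsd : G.PosSemidef := by
    have h := hF.1.mul_mul_conjTranspose_same (star U)
    rw [Matrix.star_eq_conjTranspose U, Matrix.conjTranspose_conjTranspose] at h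
    rw [hG, Matrix.star_eq_conjTranspose]
    exact h
  have hGtr : G.trace = 1 := by
    rw [hG, Matrix.trace_mul_cycle, mul_star_self_eigenvectorUnitary, Matrix.one_mul, hF.2]
  have htr : (M * F).trace = (D * G).trace := by
    have hspec : M = U * D * star U := hM.spectral_theorem
    have h1 : M * F = U * (D * (star U * F)) := by
      rw [hspec]
      simp only [Matrix.mul_assoc]
    have h2 : G = star U * (F * U) := by rw [hG, Matrix.mul_assoc]
    rw [h1, Matrix.trace_mul_comm, h2]
    simp only [Matrix.mul_assoc]
  have hdiagsum : ∑ i, (G i i).re = 1 := by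
    have : G.trace.re = 1 := by rw [hGtr]; rfl
    rw [Matrix.trace] at this
    simpa [Complex.re_sum, Matrix.diag] using this
  rw [htr, Matrix.trace]
  simp only [Complex.re_sum, Matrix.diag]
  calc ∑ i, ((D * G) i i).re
      = ∑ i, hM.eigenvalues i * (G i i).re := by
        refine Finset.sum_congr rfl fun i _ => ?_
        rw [hD, Matrix.diagonal_mul]
        exact Complex.re_ofReal_mul _ _
    _ ≤ ∑ i, lmax hM * (G i i).re :=
        Finset.sum_le_sum fun i _ =>
          mul_le_mul_of_nonneg_right (eigenvalues_le_lmax hM i) (psd_diag_re_nonneg hGpsd i)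
    _ = lmax hM := by rw [← Finset.mul_sum, hdiagsum, mul_one]

/-- B2: the bound `λ_max` is attained by some density matrix. -/
lemma exists_density_trace_eq_lmax (hM : M.IsHermitian) :
    ∃ F, IsDensityMatrix F ∧ ((M * F).trace).re = lmax hM := by
  classical
  set m : ℕ := (Finset.univ.filter fun i => hM.eigenvalues i = lmax hM).card with hm
  have hm0 : 0 < m := by
    obtain ⟨i, hi⟩ := exists_eigenvalues_eq_lmax hM
    exact Finset.card_pos.mpr ⟨i, Finset.mem_filter.mpr ⟨Finset.mem_univ i, hi⟩⟩
  have hmR : (0 : ℝ) < (m : ℝ) := Nat.cast_pos.mpr hm0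
  set g : ℝ → ℝ := fun t => if t = lmax hM then (m : ℝ)⁻¹ else 0 with hg
  refine ⟨sf hM g, ⟨?_, ?_⟩, ?_⟩
  · refine sf_posSemidef hM fun i => ?_
    rw [hg]
    dsimp only
    split
    · positivity
    · exact le_refl 0
  · rw [trace_sf]
    have : ∑ i, g (hM.eigenvalues i) = 1 := by
      rw [hg]
      dsimp only
      rw [← Finset.sum_filter]
      rw [Finset.sum_const, ← hm, nsmul_eq_mul, mul_inv_cancel₀ (ne_of_gt hmR)]
    rw [this, Complex.ofReal_one]
  · have hmul := sf_mul_sf hM id g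
    rw [sf_id] at hmul
    rw [hmul, trace_sf_re]
    have : ∀ i, (fun t => id t * g t) (hM.eigenvalues i)
        = if hM.eigenvalues i = lmax hM then lmax hM * (m : ℝ)⁻¹ else 0 := by
      intro i
      dsimp only [id]
      rw [hg]
      dsimp only
      split
      · rename_i h
        rw [h]
      · exact mul_zero _
    rw [Finset.sum_congr rfl fun i _ => this i, ← Finset.sum_filter, Finset.sum_const, ← hm,
      nsmul_eq_mul]
    field_simp

end lmax

section density

variable {A : Matrix (Fin d) (Fin d) ℂ}

lemma density_trace_re (hA : IsDensityMatrix A) : A.trace.re = 1 := by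
  rw [hA.2]
  rfl

lemma density_eigenvalues_sum (hA : IsDensityMatrix A) :
    ∑ i, hA.1.1.eigenvalues i = 1 := by
  have h := trace_sf_re hA.1.1 id
  rw [sf_id] at h
  simp only [id] at h
  rw [← h, density_trace_re hA]

lemma density_eigenvalues_le_one (hA : IsDensityMatrix A) (i : Fin d) :
    hA.1.1.eigenvalues i ≤ 1 := by
  rw [← density_eigenvalues_sum hA]
  exact Finset.single_le_sum (fun j _ => hA.1.eigenvalues_nonneg j) (Finset.mem_univ i)

lemma density_diag_re_le_one (hA : IsDensityMatrix A) (i : Fin d) : (A i i).re ≤ 1 := by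
  have h : ∑ j, (A j j).re = 1 := by
    have := density_trace_re hA
    rw [Matrix.trace] at this
    simpa [Complex.re_sum, Matrix.diag] using this
  rw [← h]
  exact Finset.single_le_sum (fun j _ => psd_diag_re_nonneg hA.1 j) (Finset.mem_univ i)

/-- entrywise bound for density matrices -/
lemma density_entry_norm_le_one (hA : IsDensityMatrix A) (i j : Fin d) : ‖A i j‖ ≤ 1 := by
  set s := hA.1.sqrt with hs
  have hsh : s.IsHermitian := hA.1.posSemidef_sqrt.1
  have hsym : ∀ k l : Fin d, s l k = (starRingEnd ℂ) (s k l) := by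
    intro k l
    conv_lhs => rw [← hsh.eq]
    rw [Matrix.conjTranspose_apply]
    rfl
  have hdiag : ∀ k : Fin d, (A k k).re = ∑ l, ‖s k l‖ ^ 2 := by
    intro k
    have h1 : A k k = ∑ l, s k l * (starRingEnd ℂ) (s k l) := by
      conv_lhs => rw [← hA.1.sqrt_mul_self]
      rw [Matrix.mul_apply]
      refine Finset.sum_congr rfl fun l _ => ?_
      congr 1
      exact hsym k l
    rw [h1]
    simp only [Complex.mul_conj, Complex.re_sum, Complex.ofReal_re]
    refine Finset.sum_congr rfl fun l _ => ?_
    rw [Complex.normSq_eq_norm_sq]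
  have hAij : A i j = ∑ l, s i l * s l j := by
    conv_lhs => rw [← hA.1.sqrt_mul_self]
    rw [Matrix.mul_apply]
  calc ‖A i j‖ ≤ ∑ l, ‖s i l * s l j‖ := by rw [hAij]; exact norm_sum_le _ _
    _ ≤ ∑ l, (‖s i l‖ ^ 2 + ‖s l j‖ ^ 2) / 2 := by
        refine Finset.sum_le_sum fun l _ => ?_
        rw [norm_mul]
        nlinarith [sq_nonneg (‖s i l‖ - ‖s l j‖), norm_nonneg (s i l), norm_nonneg (s l j)]
    _ = ((A i i).re + (A j j).re) / 2 := by
        rw [hdiag i, hdiag j]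
        rw [← Finset.sum_div, ← Finset.sum_add_distrib]
        congr 1
        refine Finset.sum_congr rfl fun l _ => ?_
        congr 1
        rw [hsym j l, RCLike.norm_conj]
    _ ≤ 1 := by
        have h1 := density_diag_re_le_one hA i
        have h2 := density_diag_re_le_one hA j
        linarith

/-- the set of density matrices -/
def densSet (d : ℕ) : Set (Matrix (Fin d) (Fin d) ℂ) := {F | IsDensityMatrix F}

lemma isClosed_densSet : IsClosed (densSet d) := by
  have h1 : IsClosed {F : Matrix (Fin d) (Fin d) ℂ | F.IsHermitian} := by
    have : {F : Matrix (Fin d) (Fin d) ℂ | F.IsHermitian} = {F | Fᴴ = F} := rfl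
    rw [this]
    exact isClosed_eq (Continuous.matrix_conjTranspose continuous_id) continuous_id
  have h2 : IsClosed {F : Matrix (Fin d) (Fin d) ℂ |
      ∀ x : Fin d → ℂ, 0 ≤ dotProduct (star x) (F *ᵥ x)} := by
    have : {F : Matrix (Fin d) (Fin d) ℂ | ∀ x : Fin d → ℂ,
        0 ≤ dotProduct (star x) (F *ᵥ x)}
        = ⋂ x : Fin d → ℂ, {F | 0 ≤ dotProduct (star x) (F *ᵥ x)} := by
      ext F
      simp [Set.mem_iInter]
    rw [this]
    refine isClosed_iInter fun x => ?_
    have hcont : Continuous fun F : Matrix (Fin d) (Fin d) ℂ =>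
        dotProduct (star x) (F *ᵥ x) := by
      unfold dotProduct Matrix.mulVec
      refine continuous_finset_sum _ fun i _ => Continuous.mul continuous_const ?_
      refine continuous_finset_sum _ fun j _ => Continuous.mul ?_ continuous_const
      exact (continuous_apply j).comp (continuous_apply i)
    have hset : {F : Matrix (Fin d) (Fin d) ℂ | 0 ≤ dotProduct (star x) (F *ᵥ x)}
        = (fun F : Matrix (Fin d) (Fin d) ℂ => dotProduct (star x) (F *ᵥ x)) ⁻¹'
          {z : ℂ | 0 ≤ z} := rfl
    rw [hset]
    refine IsClosed.preimage hcont ?_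
    have : {z : ℂ | 0 ≤ z} = {z : ℂ | 0 ≤ z.re} ∩ {z : ℂ | z.im = 0} := by
      ext z
      simp only [Set.mem_setOf_eq, Set.mem_inter_iff]
      rw [Complex.le_def]
      simp [eq_comm]
    rw [this]
    exact (isClosed_le continuous_const Complex.continuous_re).inter
      (isClosed_eq Complex.continuous_im continuous_const)
  have h3 : IsClosed {F : Matrix (Fin d) (Fin d) ℂ | F.trace = 1} :=
    isClosed_eq (Continuous.matrix_trace continuous_id) continuous_const
  have : densSet d = ({F : Matrix (Fin d) (Fin d) ℂ | F.IsHermitian} ∩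
      {F | ∀ x : Fin d → ℂ, 0 ≤ dotProduct (star x) (F *ᵥ x)}) ∩
      {F | F.trace = 1} := by
    ext F
    exact ⟨fun h => ⟨⟨h.1.1, h.1.dotProduct_mulVec_nonneg⟩, h.2⟩,
      fun h => ⟨Matrix.PosSemidef.of_dotProduct_mulVec_nonneg h.1.1 h.1.2, h.2⟩⟩
  rw [this]
  exact (h1.inter h2).inter h3

lemma isCompact_densSet : IsCompact (densSet d) := by
  have hK : IsCompact {M : Matrix (Fin d) (Fin d) ℂ |
      ∀ i, ∀ j, M i j ∈ Metric.closedBall (0 : ℂ) 1} := by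
    have : {M : Matrix (Fin d) (Fin d) ℂ | ∀ i, ∀ j, M i j ∈ Metric.closedBall (0 : ℂ) 1}
        = Set.pi Set.univ fun _ : Fin d =>
            Set.pi Set.univ fun _ : Fin d => Metric.closedBall (0 : ℂ) 1 := by
      ext M
      constructor
      · intro h
        intro i _
        intro j _
        exact h i j
      · intro h i j
        exact h i (Set.mem_univ i) j (Set.mem_univ j)
    rw [this]
    exact isCompact_univ_pi fun _ => isCompact_univ_pi fun _ =>
      ProperSpace.isCompact_closedBall _ _
  refine IsCompact.of_isClosed_subset hK isClosed_densSet fun F hF => ?_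
  intro i j
  rw [Metric.mem_closedBall, dist_zero_right]
  exact density_entry_norm_le_one hF i j

end density

section misc

lemma trace_sum_smul_mul_re {X : Type*} [Fintype X] (P : X → ℝ)
    (T : X → Matrix (Fin d) (Fin d) ℂ) (F : Matrix (Fin d) (Fin d) ℂ) :
    ((∑ x, (P x : ℂ) • T x) * F).trace.re = ∑ x, P x * ((T x * F).trace).re := by
  rw [Finset.sum_mul, Matrix.trace_sum]
  rw [Complex.re_sum]
  refine Finset.sum_congr rfl fun x _ => ?_
  rw [smul_mul_assoc, Matrix.trace_smul, smul_eq_mul, Complex.re_ofReal_mul]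

lemma trace_sf_mul_mono {A F : Matrix (Fin d) (Fin d) ℂ} (hA : A.IsHermitian)
    (hF : F.PosSemidef) {f g : ℝ → ℝ}
    (h : ∀ i, f (hA.eigenvalues i) ≤ g (hA.eigenvalues i)) :
    (sf hA f * F).trace.re ≤ (sf hA g * F).trace.re := by
  have hpsd : (sf hA (fun t => g t - f t)).PosSemidef :=
    sf_posSemidef hA fun i => sub_nonneg.2 (h i)
  have h0 : 0 ≤ ((sf hA fun t => g t - f t) * F).trace.re :=
    psd_mul_psd_trace_re_nonneg hpsd hF
  rw [← sf_sub hA g f, Matrix.sub_mul, Matrix.trace_sub, Complex.sub_re] at h0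
  linarith

lemma negLog_antitone : Antitone negLog := by
  intro r s hrs
  show negLog s ≤ negLog r
  unfold negLog
  by_cases hr : r ≤ 0
  · rw [if_pos hr]
    exact le_top
  · have hrpos : 0 < r := lt_of_not_ge hr
    have hs : ¬s ≤ 0 := not_le.mpr (hrpos.trans_le hrs)
    rw [if_neg hr, if_neg hs]
    refine ENNReal.ofReal_le_ofReal ?_
    have := Real.log_le_log hrpos hrs
    linarith

lemma negLog_of_pos {r : ℝ} (h : 0 < r) : negLog r = ENNReal.ofReal (-Real.log r) := by
  rw [negLog, if_neg (not_le.mpr h)]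

lemma iSup_negLog_eq {X : Type*} [Fintype X] [Nonempty X] (t : X → ℝ) :
    (⨆ x, negLog (t x)) = negLog (Finset.univ.inf' Finset.univ_nonempty t) := by
  refine le_antisymm (iSup_le fun x => negLog_antitone (Finset.inf'_le _ (Finset.mem_univ x))) ?_
  obtain ⟨x₀, _, hx₀⟩ := Finset.exists_mem_eq_inf' (Finset.univ_nonempty (α := X)) t
  rw [hx₀]
  exact le_iSup (fun x => negLog (t x)) x₀

lemma continuous_finset_inf' {ι E : Type*} [TopologicalSpace E] (s : Finset ι) (hs : s.Nonempty)
    (g : ι → E → ℝ) (hg : ∀ i, Continuous (g i)) :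
    Continuous fun e => s.inf' hs fun i => g i e := by
  induction hs using Finset.Nonempty.cons_induction with
  | singleton a => simpa using hg a
  | cons a s ha hs ih =>
      have heq : (fun e => (Finset.cons a s ha).inf' (Finset.cons_nonempty ha) fun i => g i e)
          = fun e => min (g a e) (s.inf' hs fun i => g i e) := by
        funext e
        rw [Finset.inf'_cons]
      rw [heq]
      exact Continuous.min (hg a) ih

lemma real_smul_matrix_eq {a : ℝ} {F : Matrix (Fin d) (Fin d) ℂ} :
    a • F = ((a : ℂ)) • F := by
  ext i j
  simp [Complex.real_smul]

lemma densSet_convex : Convex ℝ (densSet d) := by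
  intro F hF G hG a b ha hb hab
  have hsum : a • F + b • G = ((a : ℂ)) • F + ((b : ℂ)) • G := by
    rw [real_smul_matrix_eq, real_smul_matrix_eq]
  constructor
  · rw [hsum]
    exact ((smul_posSemidef hF.1 ha).add (smul_posSemidef hG.1 hb))
  · rw [hsum, Matrix.trace_add, Matrix.trace_smul, Matrix.trace_smul, hF.2, hG.2]
    rw [smul_eq_mul, smul_eq_mul, mul_one, mul_one]
    rw [← Complex.ofReal_add, hab, Complex.ofReal_one]

lemma density_inv_d_smul_one (hd : 0 < d) :
    IsDensityMatrix ((((d : ℝ))⁻¹ : ℂ) • (1 : Matrix (Fin d) (Fin d) ℂ)) := by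
  have hdc : ((d : ℂ)) ≠ 0 := Nat.cast_ne_zero.mpr hd.ne'
  constructor
  · have : ((((d : ℝ))⁻¹ : ℝ) : ℂ) = (((d : ℝ))⁻¹ : ℂ) := by push_cast; ring
    rw [← this]
    exact smul_posSemidef Matrix.PosSemidef.one (by positivity)
  · rw [Matrix.trace_smul, Matrix.trace_one, Fintype.card_fin, smul_eq_mul]
    push_cast
    field_simp

end misc

section minimax

variable {X : Type*} [Fintype X] [Nonempty X]

/-- Separation step of the minimax theorem: if no density matrix `F` achieves
`Tr(T x F) > v` for all `x`, then some probability vector `P` has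
`∑ P x Tr(T x F) ≤ v` for every density matrix `F`. -/
lemma exists_opt_P {T : X → Matrix (Fin d) (Fin d) ℂ} {v : ℝ} (hd : 0 < d)
    (hv : ∀ F, IsDensityMatrix F → ∃ x, ((T x * F).trace).re ≤ v) :
    ∃ P : X → ℝ, (∀ x, 0 ≤ P x) ∧ (∑ x, P x = 1) ∧
      ∀ F, IsDensityMatrix F → ∑ x, P x * ((T x * F).trace).re ≤ v := by
  classical
  set t : X → Matrix (Fin d) (Fin d) ℂ → ℝ := fun x F => ((T x * F).trace).re with ht
  set B : Set (X → ℝ) :=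
    {y | ∃ F, IsDensityMatrix F ∧ y = fun x => t x F - v} with hB
  set O : Set (X → ℝ) := {y | ∀ x, 0 < y x} with hO
  have hOpi : O = Set.pi Set.univ fun _ : X => Set.Ioi (0 : ℝ) := by
    ext y
    simp [hO, Set.mem_pi]
  have hOopen : IsOpen O := by
    rw [hOpi]
    exact isOpen_set_pi Set.finite_univ fun _ _ => isOpen_Ioi
  have hOconv : Convex ℝ O := by
    rw [hOpi]
    exact convex_pi fun _ _ => convex_Ioi 0
  have hBconv : Convex ℝ B := by
    rintro y₁ ⟨F₁, hF₁, rfl⟩ y₂ ⟨F₂, hF₂, rfl⟩ a b ha hb hab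
    refine ⟨a • F₁ + b • F₂, densSet_convex hF₁ hF₂ ha hb hab, ?_⟩
    funext x
    have hsum : (a • F₁ + b • F₂ : Matrix (Fin d) (Fin d) ℂ)
        = ((a : ℂ)) • F₁ + ((b : ℂ)) • F₂ := by
      rw [real_smul_matrix_eq, real_smul_matrix_eq]
    have hexp : t x (a • F₁ + b • F₂) = a * t x F₁ + b * t x F₂ := by
      rw [ht]
      dsimp only
      rw [hsum, Matrix.mul_add, Matrix.trace_add, Matrix.mul_smul, Matrix.mul_smul,
        Matrix.trace_smul, Matrix.trace_smul, Complex.add_re, smul_eq_mul, smul_eq_mul,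
        Complex.re_ofReal_mul, Complex.re_ofReal_mul]
    simp only [Pi.add_apply, Pi.smul_apply, smul_eq_mul]
    rw [hexp]
    linear_combination (-v) * hab
  have hdisj : Disjoint O B := by
    rw [Set.disjoint_left]
    rintro y hyO ⟨F, hF, rfl⟩
    obtain ⟨x, hx⟩ := hv F hF
    exact absurd (hyO x) (by simpa using not_lt.mpr (sub_nonpos.mpr hx))
  obtain ⟨f, u, hfO, hfB⟩ := geometric_hahn_banach_open hOconv hOopen hBconv hdisj
  set onev : X → ℝ := fun _ => 1 with honev
  have honevO : onev ∈ O := fun x => one_pos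
  have hz : ∀ z : X → ℝ, (∀ x, 0 ≤ z x) → f z ≤ 0 := by
    intro z hz0
    by_contra hpos
    push_neg at hpos
    obtain ⟨n, hn⟩ := exists_nat_gt ((u - f onev) / f z)
    have hmem : ((n : ℝ) • z + onev) ∈ O := fun x => by
      have : 0 ≤ (n : ℝ) * z x := mul_nonneg (Nat.cast_nonneg n) (hz0 x)
      simp only [Pi.add_apply, Pi.smul_apply, smul_eq_mul, honev]
      linarith
    have hlt := hfO _ hmem
    rw [map_add, f.map_smul, smul_eq_mul] at hlt
    have : (u - f onev) / f z * f z < (n : ℝ) * f z :=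
      (mul_lt_mul_of_pos_right hn hpos)
    rw [div_mul_cancel₀ _ (ne_of_gt hpos)] at this
    linarith
  have hu0 : 0 ≤ u := by
    have htend : Filter.Tendsto (fun n : ℕ => (1 / (n : ℝ)) * f onev)
        Filter.atTop (nhds 0) := by
      simpa using tendsto_one_div_atTop_nhds_zero_nat.mul_const (f onev)
    refine le_of_tendsto htend (Filter.eventually_atTop.2 ⟨1, fun n hn => ?_⟩)
    have hnpos : (0 : ℝ) < 1 / (n : ℝ) := by
      have : (0 : ℝ) < (n : ℝ) := by exact_mod_cast hn
      positivity
    have hmem : ((1 / (n : ℝ)) • onev) ∈ O := fun x => by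
      simp only [Pi.smul_apply, smul_eq_mul, honev]
      linarith
    have h5 := hfO _ hmem
    rw [f.map_smul, smul_eq_mul] at h5
    exact h5.le
  set q : X → ℝ := fun x => f (Pi.single x (1 : ℝ)) with hq
  have hqle : ∀ x, q x ≤ 0 := by
    intro x
    refine hz _ fun j => ?_
    rw [Pi.single_apply]
    split <;> norm_num
  have hfy : ∀ y : X → ℝ, f y = ∑ x, y x * q x := by
    intro y
    have hrepr : y = ∑ x, y x • (Pi.single x (1 : ℝ) : X → ℝ) := by
      have h1 := pi_eq_sum_univ y
      convert h1 using 2 with x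
      funext j
      simp [Pi.single_apply, Pi.smul_apply, eq_comm]
    conv_lhs => rw [hrepr]
    rw [map_sum]
    refine Finset.sum_congr rfl fun x _ => ?_
    rw [f.map_smul, smul_eq_mul, hq]
  have hBne : ∃ y, y ∈ B := by
    refine ⟨_, ⟨_, density_inv_d_smul_one hd, rfl⟩⟩
  have hqne : ∃ x, q x < 0 := by
    by_contra hall
    push_neg at hall
    have hq0 : ∀ x, q x = 0 := fun x => le_antisymm (hqle x) (hall x)
    have hf0 : ∀ y, f y = 0 := fun y => by
      rw [hfy]
      simp [hq0]
    obtain ⟨y, hy⟩ := hBne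
    have h1 := hfB y hy
    have h2 := hfO onev honevO
    rw [hf0 y] at h1
    rw [hf0 onev] at h2
    linarith
  set s : ℝ := ∑ x, -q x with hs
  have hspos : 0 < s := by
    obtain ⟨x₀, hx₀⟩ := hqne
    refine Finset.sum_pos' (fun x _ => by linarith [hqle x]) ⟨x₀, Finset.mem_univ x₀, by linarith⟩
  refine ⟨fun x => -q x / s, fun x => div_nonneg (by linarith [hqle x]) hspos.le, ?_, ?_⟩
  · rw [← Finset.sum_div, ← hs, div_self (ne_of_gt hspos)]
  · intro F hF
    have hymem : (fun x => t x F - v) ∈ B := ⟨F, hF, rfl⟩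
    have h1 : u ≤ ∑ x, (t x F - v) * q x := by
      have := hfB _ hymem
      rwa [hfy] at this
    have h2 : 0 ≤ ∑ x, (t x F - v) * q x := hu0.trans h1
    have h3 : ∑ x, -q x * t x F ≤ v * s := by
      have hexpand : ∑ x, (t x F - v) * q x = -(∑ x, -q x * t x F) + v * s := by
        rw [hs, Finset.mul_sum, neg_eq_neg_one_mul, Finset.mul_sum, ← Finset.sum_add_distrib]
        refine Finset.sum_congr rfl fun x _ => ?_
        ring
      rw [hexpand] at h2
      linarith
    calc ∑ x, -q x / s * t x F = (∑ x, -q x * t x F) / s := by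
          rw [Finset.sum_div]
          refine Finset.sum_congr rfl fun x _ => ?_
          ring
      _ ≤ v * s / s := div_le_div_of_nonneg_right h3 hspos.le
      _ = v := by field_simp

end minimax

section lmx

variable [Nonempty (Fin d)]

/-- largest eigenvalue, junk 0 on non-Hermitian matrices -/
noncomputable def lmx (M : Matrix (Fin d) (Fin d) ℂ) : ℝ :=
  if hM : M.IsHermitian then lmax hM else 0

lemma lmx_of_herm {M : Matrix (Fin d) (Fin d) ℂ} (hM : M.IsHermitian) : lmx M = lmax hM := by
  rw [lmx, dif_pos hM]

lemma trace_le_lmx {M F : Matrix (Fin d) (Fin d) ℂ} (hM : M.IsHermitian)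
    (hF : IsDensityMatrix F) : ((M * F).trace).re ≤ lmx M := by
  rw [lmx_of_herm hM]
  exact trace_mul_density_re_le_lmax hM hF

lemma exists_trace_eq_lmx {M : Matrix (Fin d) (Fin d) ℂ} (hM : M.IsHermitian) :
    ∃ F, IsDensityMatrix F ∧ ((M * F).trace).re = lmx M := by
  rw [lmx_of_herm hM]
  exact exists_density_trace_eq_lmax hM

lemma eigenvalues_le_lmx {M : Matrix (Fin d) (Fin d) ℂ} (hM : M.IsHermitian) (i : Fin d) :
    hM.eigenvalues i ≤ lmx M := by
  rw [lmx_of_herm hM]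
  exact eigenvalues_le_lmax hM i

lemma exists_eigenvalues_eq_lmx {M : Matrix (Fin d) (Fin d) ℂ} (hM : M.IsHermitian) :
    ∃ i, hM.eigenvalues i = lmx M := by
  rw [lmx_of_herm hM]
  exact exists_eigenvalues_eq_lmax hM

end lmx

section sums

lemma sf_smul {A : Matrix (Fin d) (Fin d) ℂ} (hA : A.IsHermitian) (f : ℝ → ℝ) (c : ℝ) :
    (c : ℂ) • sf hA f = sf hA (fun t => c * f t) := by
  have hfun : (fun i => ((c * f (hA.eigenvalues i) : ℝ) : ℂ))
      = (c : ℂ) • fun i => ((f (hA.eigenvalues i) : ℝ) : ℂ) := by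
    funext i
    simp only [Pi.smul_apply, smul_eq_mul]
    push_cast
    ring
  rw [sf, sf, hfun, Matrix.diagonal_smul, Matrix.mul_smul, Matrix.smul_mul]

lemma posSemidef_sum_smul {X : Type*} [Fintype X] {T : X → Matrix (Fin d) (Fin d) ℂ}
    (hT : ∀ x, (T x).PosSemidef) {P : X → ℝ} (hP : ∀ x, 0 ≤ P x) :
    (∑ x, (P x : ℂ) • T x).PosSemidef := by
  refine Finset.sum_induction _ _ (fun a b ha hb => ha.add hb) Matrix.PosSemidef.zero
    fun x _ => smul_posSemidef (hT x) (hP x)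

end sums

section mufacts

variable {X : Type*} [Fintype X] [Nonempty X] [Nonempty (Fin d)]

lemma suppProj_posSemidef {A : Matrix (Fin d) (Fin d) ℂ} (hA : A.IsHermitian) :
    (suppProj A).PosSemidef := by
  rw [suppProj_eq_sf hA]
  refine sf_posSemidef hA fun i => ?_
  split <;> norm_num

lemma matRpow_posSemidef {A : Matrix (Fin d) (Fin d) ℂ} (hA : A.PosSemidef) (β : ℝ) :
    (matRpow A β).PosSemidef := by
  rw [matRpow_eq_sf hA.1]
  exact sf_posSemidef hA.1 fun i => Real.rpow_nonneg (hA.eigenvalues_nonneg i) β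

lemma matRpow_trace_bounds {M : Matrix (Fin d) (Fin d) ℂ} (hM : M.PosSemidef) {γ : ℝ}
    (hγ : 0 ≤ γ) :
    lmx M ^ γ ≤ (matRpow M γ).trace.re ∧ (matRpow M γ).trace.re ≤ d * lmx M ^ γ := by
  rw [matRpow_eq_sf hM.1, trace_sf_re]
  constructor
  · obtain ⟨i₀, hi₀⟩ := exists_eigenvalues_eq_lmx hM.1
    rw [← hi₀]
    exact Finset.single_le_sum
      (fun i _ => Real.rpow_nonneg (hM.eigenvalues_nonneg i) γ) (Finset.mem_univ i₀)
  · calc ∑ i, hM.1.eigenvalues i ^ γ ≤ ∑ _i : Fin d, lmx M ^ γ :=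
          Finset.sum_le_sum fun i _ => Real.rpow_le_rpow (hM.eigenvalues_nonneg i)
            (eigenvalues_le_lmx hM.1 i) hγ
      _ = d * lmx M ^ γ := by
          rw [Finset.sum_const, Finset.card_univ, Fintype.card_fin, nsmul_eq_mul]

lemma mu_facts (S : X → Matrix (Fin d) (Fin d) ℂ) (hS : ∀ x, IsDensityMatrix (S x))
    {c : ℝ} (hc0 : 0 < c)
    (hc : ∀ x i, (hS x).1.1.eigenvalues i ≠ 0 → c ≤ (hS x).1.1.eigenvalues i)
    {β : ℝ} (hβ0 : 0 < β) (hβ1 : β ≤ 1)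
    {P : X → ℝ} (hP0 : ∀ x, 0 ≤ P x) :
    (∑ x, (P x : ℂ) • matRpow (S x) β).PosSemidef ∧
    (∑ x, (P x : ℂ) • suppProj (S x)).PosSemidef ∧
    c ^ β * lmx (∑ x, (P x : ℂ) • suppProj (S x))
      ≤ lmx (∑ x, (P x : ℂ) • matRpow (S x) β) ∧
    lmx (∑ x, (P x : ℂ) • matRpow (S x) β)
      ≤ lmx (∑ x, (P x : ℂ) • suppProj (S x)) := by
  have hMP : (∑ x, (P x : ℂ) • matRpow (S x) β).PosSemidef :=
    posSemidef_sum_smul (fun x => matRpow_posSemidef (hS x).1 β) hP0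
  have hNP : (∑ x, (P x : ℂ) • suppProj (S x)).PosSemidef :=
    posSemidef_sum_smul (fun x => suppProj_posSemidef (hS x).1.1) hP0
  -- pointwise comparison, upper
  have hcomp_up : ∀ x, ∀ F : Matrix (Fin d) (Fin d) ℂ, F.PosSemidef →
      ((matRpow (S x) β * F).trace).re ≤ ((suppProj (S x) * F).trace).re := by
    intro x F hF
    rw [matRpow_eq_sf (hS x).1.1, suppProj_eq_sf (hS x).1.1]
    refine trace_sf_mul_mono (hS x).1.1 hF fun i => ?_
    by_cases h : (hS x).1.1.eigenvalues i = 0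
    · rw [h, Real.zero_rpow (ne_of_gt hβ0), if_pos rfl]
    · rw [if_neg h]
      exact Real.rpow_le_one ((hS x).1.eigenvalues_nonneg i)
        (density_eigenvalues_le_one (hS x) i) hβ0.le
  -- pointwise comparison, lower
  have hcomp_lo : ∀ x, ∀ F : Matrix (Fin d) (Fin d) ℂ, F.PosSemidef →
      c ^ β * ((suppProj (S x) * F).trace).re ≤ ((matRpow (S x) β * F).trace).re := by
    intro x F hF
    have hsmul : sf (hS x).1.1 (fun t => c ^ β * (if t = 0 then 0 else 1))
        = ((c ^ β : ℝ) : ℂ) • sf (hS x).1.1 (fun t => if t = 0 then 0 else 1) := by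
      rw [sf_smul]
    have h1 : ((sf (hS x).1.1 (fun t => c ^ β * (if t = 0 then 0 else 1)) * F).trace).re
        = c ^ β * ((suppProj (S x) * F).trace).re := by
      rw [hsmul, Matrix.smul_mul, Matrix.trace_smul, smul_eq_mul, Complex.re_ofReal_mul,
        suppProj_eq_sf (hS x).1.1]
    rw [← h1, matRpow_eq_sf (hS x).1.1]
    refine trace_sf_mul_mono (hS x).1.1 hF fun i => ?_
    by_cases h : (hS x).1.1.eigenvalues i = 0
    · rw [h, Real.zero_rpow (ne_of_gt hβ0), if_pos rfl, mul_zero]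
    · rw [if_neg h, mul_one]
      exact Real.rpow_le_rpow hc0.le (hc x i h) hβ0.le
  -- summed comparisons
  have hup : ∀ F : Matrix (Fin d) (Fin d) ℂ, F.PosSemidef →
      (((∑ x, (P x : ℂ) • matRpow (S x) β) * F).trace).re
        ≤ (((∑ x, (P x : ℂ) • suppProj (S x)) * F).trace).re := by
    intro F hF
    rw [trace_sum_smul_mul_re, trace_sum_smul_mul_re]
    exact Finset.sum_le_sum fun x _ =>
      mul_le_mul_of_nonneg_left (hcomp_up x F hF) (hP0 x)
  have hlo : ∀ F : Matrix (Fin d) (Fin d) ℂ, F.PosSemidef →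
      c ^ β * (((∑ x, (P x : ℂ) • suppProj (S x)) * F).trace).re
        ≤ (((∑ x, (P x : ℂ) • matRpow (S x) β) * F).trace).re := by
    intro F hF
    rw [trace_sum_smul_mul_re, trace_sum_smul_mul_re, Finset.mul_sum]
    refine Finset.sum_le_sum fun x _ => ?_
    calc c ^ β * (P x * ((suppProj (S x) * F).trace).re)
        = P x * (c ^ β * ((suppProj (S x) * F).trace).re) := by ring
      _ ≤ P x * ((matRpow (S x) β * F).trace).re :=
          mul_le_mul_of_nonneg_left (hcomp_lo x F hF) (hP0 x)
  refine ⟨hMP, hNP, ?_, ?_⟩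
  · obtain ⟨F₃, hF₃, hF₃eq⟩ := exists_trace_eq_lmx hNP.1
    calc c ^ β * lmx (∑ x, (P x : ℂ) • suppProj (S x))
        = c ^ β * (((∑ x, (P x : ℂ) • suppProj (S x)) * F₃).trace).re := by rw [hF₃eq]
      _ ≤ (((∑ x, (P x : ℂ) • matRpow (S x) β) * F₃).trace).re := hlo F₃ hF₃.1
      _ ≤ lmx (∑ x, (P x : ℂ) • matRpow (S x) β) := trace_le_lmx hMP.1 hF₃
  · obtain ⟨F₂, hF₂, hF₂eq⟩ := exists_trace_eq_lmx hMP.1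
    calc lmx (∑ x, (P x : ℂ) • matRpow (S x) β)
        = (((∑ x, (P x : ℂ) • matRpow (S x) β) * F₂).trace).re := hF₂eq.symm
      _ ≤ (((∑ x, (P x : ℂ) • suppProj (S x)) * F₂).trace).re := hup F₂ hF₂.1
      _ ≤ lmx (∑ x, (P x : ℂ) • suppProj (S x)) := trace_le_lmx hNP.1 hF₂

end mufacts

section E0sec

variable {X : Type*} [Fintype X] [Nonempty X] [Nonempty (Fin d)]
variable {S : X → Matrix (Fin d) (Fin d) ℂ}

set_option maxHeartbeats 1000000 in
lemma E0_elem_le (hS : ∀ x, IsDensityMatrix (S x)) {c v R : ℝ}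
    (hc0 : 0 < c)
    (hc : ∀ x i, (hS x).1.1.eigenvalues i ≠ 0 → c ≤ (hS x).1.1.eigenvalues i)
    (hv0 : 0 < v) (hR : R = -Real.log v)
    (hlam : ∀ P : X → ℝ, (∀ x, 0 ≤ P x) → ∑ x, P x = 1 →
      v ≤ lmx (∑ x, (P x : ℂ) • suppProj (S x)))
    {ρ : ℝ} (hρ : 1 ≤ ρ) :
    ∀ r ∈ {r : ℝ | ∃ P : X → ℝ, (∀ x, 0 ≤ P x) ∧ (∑ x, P x = 1) ∧
      r = -Real.log
        ((matRpow (∑ x, (P x : ℂ) • matRpow (S x) (1 / (1 + ρ))) (1 + ρ)).trace.re)},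
      r ≤ (1 + ρ) * R - Real.log c := by
  rintro r ⟨P, hP0, hP1, rfl⟩
  have h1ρ : (0 : ℝ) < 1 + ρ := by linarith
  have hβ0 : 0 < 1 / (1 + ρ) := by positivity
  have hβ1 : 1 / (1 + ρ) ≤ 1 := by
    rw [div_le_one h1ρ]
    linarith
  obtain ⟨hMP, hNP, hlow, hhigh⟩ := mu_facts S hS hc0 hc hβ0 hβ1 hP0
  set μ := lmx (∑ x, (P x : ℂ) • matRpow (S x) (1 / (1 + ρ))) with hμ
  set lam := lmx (∑ x, (P x : ℂ) • suppProj (S x)) with hlamdef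
  have hlamv : v ≤ lam := hlam P hP0 hP1
  have hlampos : 0 < lam := lt_of_lt_of_le hv0 hlamv
  have hcb : 0 < c ^ (1 / (1 + ρ)) := Real.rpow_pos_of_pos hc0 _
  have hμpos : 0 < μ := lt_of_lt_of_le (mul_pos hcb hlampos) hlow
  obtain ⟨htrlow, _⟩ := matRpow_trace_bounds hMP (le_of_lt h1ρ)
  rw [← hμ] at htrlow
  set tr := (matRpow (∑ x, (P x : ℂ) • matRpow (S x) (1 / (1 + ρ))) (1 + ρ)).trace.re with htr
  have hμρpos : 0 < μ ^ (1 + ρ) := Real.rpow_pos_of_pos hμpos _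
  have htrpos : 0 < tr := lt_of_lt_of_le hμρpos htrlow
  have p1 : Real.log (μ ^ (1 + ρ)) ≤ Real.log tr := Real.log_le_log hμρpos htrlow
  rw [Real.log_rpow hμpos] at p1
  have p2 : (1 / (1 + ρ)) * Real.log c + Real.log lam ≤ Real.log μ := by
    have h := Real.log_le_log (mul_pos hcb hlampos) hlow
    rwa [Real.log_mul (ne_of_gt hcb) (ne_of_gt hlampos), Real.log_rpow hc0] at h
  have p3 : Real.log v ≤ Real.log lam := Real.log_le_log hv0 hlamv
  have hmul : (1 + ρ) * (1 / (1 + ρ)) = 1 := mul_one_div_cancel (ne_of_gt h1ρ)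
  have h4 : (1 + ρ) * ((1 / (1 + ρ)) * Real.log c) = Real.log c := by
    rw [← mul_assoc, hmul, one_mul]
  have h6 : (1 + ρ) * ((1 / (1 + ρ)) * Real.log c + Real.log v) ≤ (1 + ρ) * Real.log μ :=
    mul_le_mul_of_nonneg_left (by linarith) h1ρ.le
  rw [mul_add, h4] at h6
  rw [hR]
  nlinarith [h6, p1]

set_option maxHeartbeats 1000000 in
lemma E0_le (hS : ∀ x, IsDensityMatrix (S x)) {c v R : ℝ}
    (hc0 : 0 < c) (hc1 : c ≤ 1)
    (hc : ∀ x i, (hS x).1.1.eigenvalues i ≠ 0 → c ≤ (hS x).1.1.eigenvalues i)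
    (hv0 : 0 < v) (hv1 : v ≤ 1) (hR : R = -Real.log v)
    (hlam : ∀ P : X → ℝ, (∀ x, 0 ≤ P x) → ∑ x, P x = 1 →
      v ≤ lmx (∑ x, (P x : ℂ) • suppProj (S x)))
    {ρ : ℝ} (hρ : 1 ≤ ρ) :
    E0 S ρ ≤ (1 + ρ) * R - Real.log c := by
  have hRnn : 0 ≤ R := by
    rw [hR]
    simpa using Real.log_nonpos hv0.le hv1
  have hcnn : Real.log c ≤ 0 := Real.log_nonpos hc0.le hc1
  refine Real.sSup_le (E0_elem_le hS hc0 hc hv0 hR hlam hρ) ?_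
  nlinarith

set_option maxHeartbeats 1000000 in
lemma E0_ge (hd : 0 < d) (hS : ∀ x, IsDensityMatrix (S x)) {c v R : ℝ}
    (hc0 : 0 < c)
    (hc : ∀ x i, (hS x).1.1.eigenvalues i ≠ 0 → c ≤ (hS x).1.1.eigenvalues i)
    (hv0 : 0 < v) (hR : R = -Real.log v)
    (hlam : ∀ P : X → ℝ, (∀ x, 0 ≤ P x) → ∑ x, P x = 1 →
      v ≤ lmx (∑ x, (P x : ℂ) • suppProj (S x)))
    {Q : X → ℝ} (hQ0 : ∀ x, 0 ≤ Q x) (hQ1 : ∑ x, Q x = 1)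
    (hopt : lmx (∑ x, (Q x : ℂ) • suppProj (S x)) ≤ v)
    {ρ : ℝ} (hρ : 1 ≤ ρ) :
    (1 + ρ) * R - Real.log d ≤ E0 S ρ := by
  have h1ρ : (0 : ℝ) < 1 + ρ := by linarith
  have hβ0 : 0 < 1 / (1 + ρ) := by positivity
  have hβ1 : 1 / (1 + ρ) ≤ 1 := by
    rw [div_le_one h1ρ]
    linarith
  obtain ⟨hMP, hNP, hlow, hhigh⟩ := mu_facts S hS hc0 hc hβ0 hβ1 hQ0
  set μ := lmx (∑ x, (Q x : ℂ) • matRpow (S x) (1 / (1 + ρ))) with hμ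
  set lam := lmx (∑ x, (Q x : ℂ) • suppProj (S x)) with hlamdef
  have hlamv : v ≤ lam := hlam Q hQ0 hQ1
  have hlampos : 0 < lam := lt_of_lt_of_le hv0 hlamv
  have hcb : 0 < c ^ (1 / (1 + ρ)) := Real.rpow_pos_of_pos hc0 _
  have hμpos : 0 < μ := lt_of_lt_of_le (mul_pos hcb hlampos) hlow
  have hμv : μ ≤ v := hhigh.trans hopt
  obtain ⟨htrlow, htrhigh⟩ := matRpow_trace_bounds hMP (le_of_lt h1ρ)
  rw [← hμ] at htrlow htrhigh
  set tr := (matRpow (∑ x, (Q x : ℂ) • matRpow (S x) (1 / (1 + ρ))) (1 + ρ)).trace.re with htr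
  have hμρpos : 0 < μ ^ (1 + ρ) := Real.rpow_pos_of_pos hμpos _
  have htrpos : 0 < tr := lt_of_lt_of_le hμρpos htrlow
  have hdpos : (0 : ℝ) < d := Nat.cast_pos.mpr hd
  -- the element is in the set
  have hmem : -Real.log tr ∈ {r : ℝ | ∃ P : X → ℝ, (∀ x, 0 ≤ P x) ∧ (∑ x, P x = 1) ∧
      r = -Real.log
        ((matRpow (∑ x, (P x : ℂ) • matRpow (S x) (1 / (1 + ρ))) (1 + ρ)).trace.re)} :=
    ⟨Q, hQ0, hQ1, rfl⟩
  have hbdd : BddAbove {r : ℝ | ∃ P : X → ℝ, (∀ x, 0 ≤ P x) ∧ (∑ x, P x = 1) ∧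
      r = -Real.log
        ((matRpow (∑ x, (P x : ℂ) • matRpow (S x) (1 / (1 + ρ))) (1 + ρ)).trace.re)} :=
    ⟨(1 + ρ) * R - Real.log c, E0_elem_le hS hc0 hc hv0 hR hlam hρ⟩
  have hE0 : -Real.log tr ≤ E0 S ρ := le_csSup hbdd hmem
  refine le_trans ?_ hE0
  -- now the estimate
  have p1 : Real.log tr ≤ Real.log (d * μ ^ (1 + ρ)) :=
    Real.log_le_log htrpos htrhigh
  rw [Real.log_mul (ne_of_gt hdpos) (ne_of_gt hμρpos), Real.log_rpow hμpos] at p1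
  have p2 : Real.log μ ≤ Real.log v := Real.log_le_log hμpos hμv
  have h6 : (1 + ρ) * Real.log μ ≤ (1 + ρ) * Real.log v :=
    mul_le_mul_of_nonneg_left p2 h1ρ.le
  rw [hR]
  nlinarith [p1, h6]

end E0sec

end CQaux

open CQaux in
set_option maxHeartbeats 2000000 in
/-- Equation (31) of the paper: `R_∞ = lim_{ρ→∞} E₀(ρ)/ρ` exists, is finite,
and equals `min_F max_x -log Tr(Πₓ F)`, where `Πₓ` projects onto the support
of `Sₓ`; the minimum is attained and finite. -/
theorem stmt8 {X : Type*} [Fintype X] [Nonempty X] (d : ℕ) (hd : 1 ≤ d)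
    (S : X → Matrix (Fin d) (Fin d) ℂ) (hS : ∀ x, IsDensityMatrix (S x)) :
    ∃ F : Matrix (Fin d) (Fin d) ℂ, IsDensityMatrix F ∧
      (∀ F' : Matrix (Fin d) (Fin d) ℂ, IsDensityMatrix F' →
        (⨆ x, negLog ((suppProj (S x) * F).trace.re)) ≤
          ⨆ x, negLog ((suppProj (S x) * F').trace.re)) ∧
      (⨆ x, negLog ((suppProj (S x) * F).trace.re)) ≠ ⊤ ∧
      Filter.Tendsto (fun ρ : ℝ => ENNReal.ofReal (E0 S ρ / ρ)) Filter.atTop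
        (nhds (⨆ x, negLog ((suppProj (S x) * F).trace.re))) := by
  classical
  haveI : Nonempty (Fin d) := ⟨⟨0, hd⟩⟩
  have hd0 : 0 < d := hd
  have hdR : (0 : ℝ) < d := Nat.cast_pos.mpr hd0
  -- the continuous objective
  have hcont : ∀ x : X, Continuous fun F : Matrix (Fin d) (Fin d) ℂ =>
      ((suppProj (S x) * F).trace).re :=
    fun x => Complex.continuous_re.comp
      (Continuous.matrix_trace (Continuous.matrix_mul continuous_const continuous_id))
  have hφcont : Continuous fun F : Matrix (Fin d) (Fin d) ℂ =>
      Finset.univ.inf' Finset.univ_nonempty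
        (fun x : X => ((suppProj (S x) * F).trace).re) :=
    continuous_finset_inf' _ _ _ hcont
  have hD_ne : (densSet d).Nonempty := ⟨_, density_inv_d_smul_one hd0⟩
  obtain ⟨Fst, hFstD, hFstmax'⟩ := isCompact_densSet.exists_isMaxOn hD_ne hφcont.continuousOn
  have hFstmax : ∀ F ∈ densSet d, Finset.univ.inf' Finset.univ_nonempty
      (fun x : X => ((suppProj (S x) * F).trace).re) ≤ Finset.univ.inf' Finset.univ_nonempty
      (fun x : X => ((suppProj (S x) * Fst).trace).re) := fun F hF => hFstmax' hF
  set v : ℝ := Finset.univ.inf' Finset.univ_nonempty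
    (fun x : X => ((suppProj (S x) * Fst).trace).re) with hv
  -- positivity of v
  have htx_pos : ∀ x : X, (0 : ℝ) < (d : ℝ)⁻¹ ∧
      ((suppProj (S x) * ((((d : ℝ))⁻¹ : ℂ) • (1 : Matrix (Fin d) (Fin d) ℂ))).trace).re
        ≥ (d : ℝ)⁻¹ := by
    intro x
    constructor
    · positivity
    · have h1 : suppProj (S x) * ((((d : ℝ))⁻¹ : ℂ) • (1 : Matrix (Fin d) (Fin d) ℂ))
          = (((d : ℝ))⁻¹ : ℂ) • suppProj (S x) := by
        rw [Matrix.mul_smul, mul_one]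
      have hco : ((((d : ℝ)) : ℂ))⁻¹ = (((d : ℝ)⁻¹ : ℝ) : ℂ) := by push_cast; ring
      rw [h1, Matrix.trace_smul, smul_eq_mul, hco, Complex.re_ofReal_mul]
      have h2 : (suppProj (S x)).trace.re
          = ∑ i, (fun t => if t = 0 then (0:ℝ) else 1) ((hS x).1.1.eigenvalues i) := by
        rw [suppProj_eq_sf (hS x).1.1, trace_sf_re]
      have h3 : ∃ i, (hS x).1.1.eigenvalues i ≠ 0 := by
        by_contra hall
        push_neg at hall
        have := density_eigenvalues_sum (hS x)
        rw [Finset.sum_congr rfl fun i _ => hall i] at this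
        simpa using this
      obtain ⟨i₀, hi₀⟩ := h3
      have h4 : (1 : ℝ) ≤ (suppProj (S x)).trace.re := by
        rw [h2]
        have hterm : (fun t => if t = 0 then (0:ℝ) else 1) ((hS x).1.1.eigenvalues i₀) = 1 := by
          simp [hi₀]
        calc (1:ℝ) = (fun t => if t = 0 then (0:ℝ) else 1) ((hS x).1.1.eigenvalues i₀) :=
              hterm.symm
          _ ≤ ∑ i, (fun t => if t = 0 then (0:ℝ) else 1) ((hS x).1.1.eigenvalues i) := by
              refine Finset.single_le_sum
                (f := fun i => (fun t => if t = 0 then (0:ℝ) else 1) ((hS x).1.1.eigenvalues i))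
                (fun i _ => ?_) (Finset.mem_univ i₀)
              dsimp only
              split <;> norm_num
      have h5 : (0:ℝ) < (d : ℝ)⁻¹ := by positivity
      nlinarith
  have hv0 : 0 < v := by
    have hmem := density_inv_d_smul_one (d := d) hd0
    have h1 : (0:ℝ) < Finset.univ.inf' Finset.univ_nonempty
        (fun x : X => ((suppProj (S x) *
          ((((d : ℝ))⁻¹ : ℂ) • (1 : Matrix (Fin d) (Fin d) ℂ))).trace).re) := by
      rw [Finset.lt_inf'_iff]
      intro x _
      have := htx_pos x
      linarith [this.1, this.2]
    exact lt_of_lt_of_le h1 (hFstmax _ hmem)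
  -- v ≤ 1
  have htx_le_one : ∀ (x : X) (F : Matrix (Fin d) (Fin d) ℂ), IsDensityMatrix F →
      ((suppProj (S x) * F).trace).re ≤ 1 := by
    intro x F hF
    have h1 : ((suppProj (S x) * F).trace).re
        ≤ ((sf (hS x).1.1 (fun _ => 1) * F).trace).re := by
      rw [suppProj_eq_sf (hS x).1.1]
      refine trace_sf_mul_mono (hS x).1.1 hF.1 fun i => ?_
      split <;> norm_num
    rw [sf_one, Matrix.one_mul] at h1
    rw [density_trace_re hF] at h1
    exact h1
  have hv1 : v ≤ 1 := by
    obtain ⟨x₀⟩ := (inferInstance : Nonempty X)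
    exact le_trans (Finset.inf'_le _ (Finset.mem_univ x₀)) (htx_le_one x₀ Fst hFstD)
  -- v is a lower bound for all λ(P)
  have hlam : ∀ P : X → ℝ, (∀ x, 0 ≤ P x) → ∑ x, P x = 1 →
      v ≤ lmx (∑ x, (P x : ℂ) • suppProj (S x)) := by
    intro P hP0 hP1
    have hNP : (∑ x, (P x : ℂ) • suppProj (S x)).PosSemidef :=
      posSemidef_sum_smul (fun x => suppProj_posSemidef (hS x).1.1) hP0
    have h1 : (((∑ x, (P x : ℂ) • suppProj (S x)) * Fst).trace).re
        = ∑ x, P x * ((suppProj (S x) * Fst).trace).re := trace_sum_smul_mul_re P _ Fst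
    have h2 : v ≤ (((∑ x, (P x : ℂ) • suppProj (S x)) * Fst).trace).re := by
      rw [h1]
      calc v = ∑ x, P x * v := by rw [← Finset.sum_mul, hP1, one_mul]
        _ ≤ ∑ x, P x * ((suppProj (S x) * Fst).trace).re :=
            Finset.sum_le_sum fun x _ => mul_le_mul_of_nonneg_left
              (Finset.inf'_le _ (Finset.mem_univ x)) (hP0 x)
    exact h2.trans (trace_le_lmx hNP.1 hFstD)
  -- minimax: optimal P
  have hv_hyp : ∀ F, IsDensityMatrix F → ∃ x, ((suppProj (S x) * F).trace).re ≤ v := by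
    intro F hF
    obtain ⟨x₀, _, hx₀⟩ := Finset.exists_mem_eq_inf' (Finset.univ_nonempty (α := X))
      (fun x : X => ((suppProj (S x) * F).trace).re)
    refine ⟨x₀, ?_⟩
    rw [← hx₀]
    exact hFstmax F hF
  obtain ⟨Q, hQ0, hQ1, hQle⟩ := exists_opt_P hd0 hv_hyp
  have hopt : lmx (∑ x, (Q x : ℂ) • suppProj (S x)) ≤ v := by
    have hNQ : (∑ x, (Q x : ℂ) • suppProj (S x)).PosSemidef :=
      posSemidef_sum_smul (fun x => suppProj_posSemidef (hS x).1.1) hQ0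
    obtain ⟨F₂, hF₂, hF₂eq⟩ := exists_trace_eq_lmx hNQ.1
    rw [← hF₂eq, trace_sum_smul_mul_re]
    exact hQle F₂ hF₂
  -- the constant c
  set c : ℝ := Finset.univ.inf' Finset.univ_nonempty
    (fun p : X × Fin d => if (hS p.1).1.1.eigenvalues p.2 = 0 then 1
      else (hS p.1).1.1.eigenvalues p.2) with hcdef
  have hc0 : 0 < c := by
    rw [hcdef, Finset.lt_inf'_iff]
    intro p _
    split
    · norm_num
    · rename_i h
      exact lt_of_le_of_ne ((hS p.1).1.eigenvalues_nonneg p.2) (Ne.symm h)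
  have hc1 : c ≤ 1 := by
    obtain ⟨x₀⟩ := (inferInstance : Nonempty X)
    obtain ⟨i₀⟩ := (inferInstance : Nonempty (Fin d))
    refine le_trans (Finset.inf'_le _ (Finset.mem_univ (x₀, i₀))) ?_
    dsimp only
    split
    · exact le_refl (1:ℝ)
    · exact density_eigenvalues_le_one (hS x₀) i₀
  have hc : ∀ x i, (hS x).1.1.eigenvalues i ≠ 0 → c ≤ (hS x).1.1.eigenvalues i := by
    intro x i h
    have := Finset.inf'_le (fun p : X × Fin d => if (hS p.1).1.1.eigenvalues p.2 = 0 then 1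
      else (hS p.1).1.1.eigenvalues p.2) (Finset.mem_univ (x, i))
    rw [← hcdef] at this
    simpa [h] using this
  -- the limit value
  set R : ℝ := -Real.log v with hR
  have hsup : (⨆ x, negLog ((suppProj (S x) * Fst).trace.re)) = negLog v := by
    rw [hv]
    exact iSup_negLog_eq _
  have hofR : negLog v = ENNReal.ofReal R := negLog_of_pos hv0
  refine ⟨Fst, hFstD, ?_, ?_, ?_⟩
  · intro F' hF'
    rw [hsup, iSup_negLog_eq (fun x => ((suppProj (S x) * F').trace).re)]
    exact negLog_antitone (hFstmax F' hF')
  · rw [hsup, hofR]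
    exact ENNReal.ofReal_ne_top
  · rw [hsup, hofR]
    -- squeeze
    have tendsto_aux : ∀ K : ℝ, Filter.Tendsto (fun ρ : ℝ => ((1 + ρ) * R - K) / ρ)
        Filter.atTop (nhds R) := by
      intro K
      have h1 : Filter.Tendsto (fun ρ : ℝ => R + (R - K) * ρ⁻¹) Filter.atTop
          (nhds (R + (R - K) * 0)) :=
        tendsto_const_nhds.add (tendsto_const_nhds.mul tendsto_inv_atTop_zero)
      rw [mul_zero, add_zero] at h1
      refine h1.congr' ?_
      filter_upwards [Filter.eventually_ge_atTop (1 : ℝ)] with ρ hρ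
      have hρ0 : ρ ≠ 0 := by linarith
      field_simp
      ring
    have hE0div : Filter.Tendsto (fun ρ : ℝ => E0 S ρ / ρ) Filter.atTop (nhds R) := by
      refine tendsto_of_tendsto_of_tendsto_of_le_of_le'
        (tendsto_aux (Real.log d)) (tendsto_aux (Real.log c)) ?_ ?_
      · filter_upwards [Filter.eventually_ge_atTop (1 : ℝ)] with ρ hρ
        have hρ0 : (0 : ℝ) ≤ ρ := by linarith
        exact div_le_div_of_nonneg_right
          (E0_ge hd0 hS hc0 hc hv0 hR hlam hQ0 hQ1 hopt hρ) hρ0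
      · filter_upwards [Filter.eventually_ge_atTop (1 : ℝ)] with ρ hρ
        have hρ0 : (0 : ℝ) ≤ ρ := by linarith
        exact div_le_div_of_nonneg_right
          (E0_le hS hc0 hc1 hc hv0 hv1 hR hlam hρ) hρ0
    exact ENNReal.tendsto_ofReal hE0div
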